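/- Let X ⊆ ℝⁿ be a cone over a compact set L ⊆ S^{n−1}, i.e. X = {t·u : t ≥ 0, u ∈ L}. Suppose L is path-connected and Lipschitz normally embedded in ℝⁿ. Then X is Lipschitz normally embedded: there exists k > 0 such that the inner distance in X between any two points is at most k times their Euclidean distance. -/

import Mathlib

/-- The inner (length) distance on a subset `X`: the infimum of lengths of
rectifiable paths inside `X` joining `x` to `y` (`∞` if there is none). -/
noncomputable def innerDist {E : Type*} [NormedAddCommGroup E]
    (X : Set E) (x y : E) : ENNReal :=
  sInf {l | ∃ γ : ℝ → E, Continuous γ ∧ (∀ t ∈ Set.Icc (0:ℝ) 1, γ t ∈ X) ∧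
    γ 0 = x ∧ γ 1 = y ∧ l = eVariationOn γ (Set.Icc (0:ℝ) 1)}

open Set

section Aux

variable {E : Type*} [NormedAddCommGroup E]

lemma innerDist_le_path {X : Set E} {x y : E} (γ : ℝ → E) (hc : Continuous γ)
    (hm : ∀ t ∈ Icc (0:ℝ) 1, γ t ∈ X) (h0 : γ 0 = x) (h1 : γ 1 = y) :
    innerDist X x y ≤ eVariationOn γ (Icc (0:ℝ) 1) :=
  sInf_le ⟨γ, hc, hm, h0, h1, rfl⟩

lemma innerDist_lt {X : Set E} {x y : E} {C : ENNReal} (h : innerDist X x y < C) :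
    ∃ γ : ℝ → E, Continuous γ ∧ (∀ t ∈ Icc (0:ℝ) 1, γ t ∈ X) ∧ γ 0 = x ∧ γ 1 = y ∧
      eVariationOn γ (Icc (0:ℝ) 1) < C := by
  obtain ⟨l, ⟨γ, hc, hm, h0, h1, rfl⟩, hl⟩ := sInf_lt_iff.mp h
  exact ⟨γ, hc, hm, h0, h1, hl⟩

lemma innerDist_symm_le (X : Set E) (x y : E) : innerDist X x y ≤ innerDist X y x := by
  apply sInf_le_sInf
  rintro l ⟨γ, hc, hm, h0, h1, rfl⟩
  refine ⟨fun t => γ (1 - t), hc.comp (by continuity), ?_, by norm_num [h1], by norm_num [h0], ?_⟩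
  · intro t ht
    exact hm (1 - t) ⟨by linarith [ht.2], by linarith [ht.1]⟩
  · have hanti : AntitoneOn (fun t : ℝ => 1 - t) (Icc (0:ℝ) 1) := by
      intro a _ b _ hab; simp only; linarith
    have := eVariationOn.comp_eq_of_antitoneOn γ (fun t : ℝ => 1 - t) hanti
    rw [show (fun t => γ (1 - t)) = γ ∘ (fun t : ℝ => 1 - t) from rfl, this,
      Set.image_const_sub_Icc]
    norm_num

lemma innerDist_symm (X : Set E) (x y : E) : innerDist X x y = innerDist X y x :=
  le_antisymm (innerDist_symm_le X x y) (innerDist_symm_le X y x)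

lemma innerDist_triangle (X : Set E) (x y z : E) :
    innerDist X x z ≤ innerDist X x y + innerDist X y z := by
  refine ENNReal.le_of_forall_pos_le_add fun ε hε hfin => ?_
  have h1 : innerDist X x y < ⊤ := lt_of_le_of_lt le_self_add hfin
  have h2 : innerDist X y z < ⊤ := lt_of_le_of_lt le_add_self hfin
  have hε2 : ((ε : ENNReal) / 2) ≠ 0 := by
    simp [ENNReal.div_eq_zero_iff, hε.ne']
  obtain ⟨γ₁, hc1, hm1, ha1, hb1, hv1⟩ := innerDist_lt (X := X) (x := x) (y := y)
    (ENNReal.lt_add_right h1.ne hε2)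
  obtain ⟨γ₂, hc2, hm2, ha2, hb2, hv2⟩ := innerDist_lt (X := X) (x := y) (y := z)
    (ENNReal.lt_add_right h2.ne hε2)
  set γ : ℝ → E := fun t => if t ≤ 1/2 then γ₁ (2*t) else γ₂ (2*t - 1) with hγdef
  have hjoin : ∀ t : ℝ, t = 1/2 → γ₁ (2*t) = γ₂ (2*t - 1) := by
    intro t ht; subst ht; norm_num [hb1, ha2]
  have hcont : Continuous γ := by
    apply Continuous.if_le (hc1.comp (by continuity)) (hc2.comp (by continuity))
      continuous_id continuous_const
    intro t ht; exact hjoin t ht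
  have hmem : ∀ t ∈ Icc (0:ℝ) 1, γ t ∈ X := by
    intro t ht
    by_cases h : t ≤ 1/2
    · have hgt : γ t = γ₁ (2*t) := if_pos h
      rw [hgt]; exact hm1 _ ⟨by linarith [ht.1], by linarith⟩
    · have hgt : γ t = γ₂ (2*t - 1) := if_neg h
      push_neg at h
      rw [hgt]; exact hm2 _ ⟨by linarith, by linarith [ht.2]⟩
  have hstart : γ 0 = x := by norm_num [hγdef, ha1]
  have hend : γ 1 = z := by norm_num [hγdef, hb2]
  have e1 : eVariationOn γ (Icc (0:ℝ) (1/2)) = eVariationOn γ₁ (Icc (0:ℝ) 1) := by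
    have heq : EqOn γ (γ₁ ∘ fun t : ℝ => 2*t + 0) (Icc (0:ℝ) (1/2)) := by
      intro t ht
      have hgt : γ t = γ₁ (2*t) := if_pos ht.2
      rw [hgt]; norm_num
    have hmono : MonotoneOn (fun t : ℝ => 2*t + 0) (Icc (0:ℝ) (1/2)) := by
      intro a _ b _ hab; simp only; linarith
    rw [eVariationOn.eq_of_eqOn heq, eVariationOn.comp_eq_of_monotoneOn γ₁ _ hmono,
      Set.image_affine_Icc' (by norm_num : (0:ℝ) < 2) 0 0 (1/2)]
    norm_num
  have e2 : eVariationOn γ (Icc (1/2 : ℝ) 1) = eVariationOn γ₂ (Icc (0:ℝ) 1) := by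
    have heq : EqOn γ (γ₂ ∘ fun t : ℝ => 2*t + (-1)) (Icc (1/2 : ℝ) 1) := by
      intro t ht
      by_cases h : t ≤ 1/2
      · have ht2 : t = 1/2 := le_antisymm h ht.1
        simp only [hγdef, if_pos h, Function.comp_apply]
        rw [show 2*t + (-1) = 2*t - 1 from by ring]
        exact hjoin t ht2
      · simp only [hγdef, if_neg h, Function.comp_apply]
        ring_nf
    have hmono : MonotoneOn (fun t : ℝ => 2*t + (-1)) (Icc (1/2 : ℝ) 1) := by
      intro a _ b _ hab; simp only; linarith
    rw [eVariationOn.eq_of_eqOn heq, eVariationOn.comp_eq_of_monotoneOn γ₂ _ hmono,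
      Set.image_affine_Icc' (by norm_num : (0:ℝ) < 2) (-1) (1/2) 1]
    norm_num
  have hsplit : eVariationOn γ (Icc (0:ℝ) (1/2)) + eVariationOn γ (Icc (1/2 : ℝ) 1)
      = eVariationOn γ (Icc (0:ℝ) 1) := by
    have := eVariationOn.Icc_add_Icc γ (s := univ) (by norm_num : (0:ℝ) ≤ 1/2)
      (by norm_num : (1/2:ℝ) ≤ 1) (mem_univ _)
    simpa [Set.univ_inter] using this
  calc innerDist X x z ≤ eVariationOn γ (Icc (0:ℝ) 1) :=
        innerDist_le_path γ hcont hmem hstart hend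
    _ = eVariationOn γ₁ (Icc (0:ℝ) 1) + eVariationOn γ₂ (Icc (0:ℝ) 1) := by
        rw [← hsplit, e1, e2]
    _ ≤ (innerDist X x y + ε/2) + (innerDist X y z + ε/2) :=
        add_le_add hv1.le hv2.le
    _ = innerDist X x y + innerDist X y z + ε := by
        rw [add_add_add_comm, ENNReal.add_halves]

end Aux

theorem stmt_17 (n : ℕ) (L : Set (EuclideanSpace ℝ (Fin n)))
    (hL : L ⊆ Metric.sphere (0 : EuclideanSpace ℝ (Fin n)) 1)
    (hcomp : IsCompact L) (hconn : IsPathConnected L)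
    (hLNE : ∃ k₀ : ℝ, 0 < k₀ ∧
      ∀ u ∈ L, ∀ v ∈ L, innerDist L u v ≤ ENNReal.ofReal (k₀ * ‖u - v‖))
    (X : Set (EuclideanSpace ℝ (Fin n)))
    (hX : X = {p | ∃ t : ℝ, 0 ≤ t ∧ ∃ u ∈ L, p = t • u}) :
    ∃ k : ℝ, 0 < k ∧
      ∀ x ∈ X, ∀ y ∈ X, innerDist X x y ≤ ENNReal.ofReal (k * ‖x - y‖) := by
  obtain ⟨k₀, hk₀, hbd⟩ := hLNE
  refine ⟨2*k₀ + 1, by linarith, ?_⟩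
  have hnorm : ∀ u ∈ L, ‖u‖ = 1 := by
    intro u hu
    have := hL hu
    rwa [mem_sphere_zero_iff_norm] at this
  -- key inequality for t ≤ s
  have key : ∀ t s : ℝ, 0 ≤ t → t ≤ s → ∀ u ∈ L, ∀ v ∈ L,
      innerDist X (t • u) (s • v) ≤ ENNReal.ofReal ((2*k₀ + 1) * ‖t • u - s • v‖) := by
    intro t s ht hts u hu v hv
    have hs : 0 ≤ s := ht.trans hts
    refine ENNReal.le_of_forall_pos_le_add fun ε hε _ => ?_
    -- the radial part: from t•v to s•v
    have radial : innerDist X (t • v) (s • v) ≤ ENNReal.ofReal (s - t) := by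
      set g : ℝ → ℝ := fun r => t + r * (s - t) with hgdef
      have hlip : LipschitzWith ‖v‖₊ (fun r : ℝ => r • v) := by
        apply LipschitzWith.of_dist_le_mul
        intro a b
        rw [dist_eq_norm, ← sub_smul, norm_smul, coe_nnnorm, Real.dist_eq, mul_comm]
        rfl
      have hγ : (fun r => g r • v) = (fun r : ℝ => r • v) ∘ g := rfl
      refine le_trans (innerDist_le_path (fun r => g r • v)
        (by fun_prop) ?_ (by norm_num [hgdef]) (by simp [hgdef]) ) ?_
      · intro r hr
        rw [hX]
        exact ⟨g r, by simp only [hgdef]; nlinarith [hr.1, hr.2], v, hv, rfl⟩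
      · rw [hγ]
        calc eVariationOn ((fun r : ℝ => r • v) ∘ g) (Icc (0:ℝ) 1)
            ≤ ‖v‖₊ * eVariationOn g (Icc (0:ℝ) 1) :=
              (hlip.lipschitzOnWith (s := univ)).comp_eVariationOn_le (mapsTo_univ _ _)
          _ ≤ 1 * ENNReal.ofReal (s - t) := by
              apply mul_le_mul'
              · simp [← ENNReal.coe_one, ENNReal.coe_le_coe, ← NNReal.coe_le_coe,
                  coe_nnnorm, hnorm v hv]
              · have hmono : MonotoneOn g (Icc (0:ℝ) 1) := by
                  intro a _ b _ hab; simp only [hgdef]; nlinarith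
                have := hmono.eVariationOn_le (left_mem_Icc.mpr (by norm_num))
                  (right_mem_Icc.mpr (by norm_num))
                simpa [hgdef] using this
          _ = ENNReal.ofReal (s - t) := one_mul _
    -- the scaled part: from t•u to t•v
    have scaled : innerDist X (t • u) (t • v)
        ≤ ENNReal.ofReal (t * (k₀ * ‖u - v‖)) + ε := by
      set ε' : ENNReal := (ε : ENNReal) / ENNReal.ofReal (t + 1) with hε'def
      have htne : ENNReal.ofReal (t + 1) ≠ 0 := by
        simp [ENNReal.ofReal_eq_zero]; linarith
      have hε'pos : ε' ≠ 0 := by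
        simp [hε'def, ENNReal.div_eq_zero_iff, hε.ne', ENNReal.ofReal_ne_top]
      obtain ⟨γ, hc, hm, h0, h1, hval⟩ := innerDist_lt (X := L) (x := u) (y := v)
        (lt_of_le_of_lt (hbd u hu v hv)
          (ENNReal.lt_add_right ENNReal.ofReal_ne_top hε'pos))
      have hlip : LipschitzWith ‖t‖₊ (fun w : EuclideanSpace ℝ (Fin n) => t • w) := by
        apply LipschitzWith.of_dist_le_mul
        intro a b
        rw [dist_eq_norm, dist_eq_norm, ← smul_sub, norm_smul, coe_nnnorm]
      refine le_trans (innerDist_le_path (fun r => t • γ r) (by fun_prop) ?_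
        (by simp only [h0]) (by simp only [h1])) ?_
      · intro r hr
        rw [hX]
        exact ⟨t, ht, γ r, hm r hr, rfl⟩
      · calc eVariationOn ((fun w : EuclideanSpace ℝ (Fin n) => t • w) ∘ γ) (Icc (0:ℝ) 1)
            ≤ ‖t‖₊ * eVariationOn γ (Icc (0:ℝ) 1) :=
              (hlip.lipschitzOnWith (s := univ)).comp_eVariationOn_le (mapsTo_univ _ _)
          _ ≤ ENNReal.ofReal t * (ENNReal.ofReal (k₀ * ‖u - v‖) + ε') := by
              apply mul_le_mul' _ hval.le
              rw [← ENNReal.ofReal_coe_nnreal, coe_nnnorm]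
              exact ENNReal.ofReal_le_ofReal
                (le_of_eq (by rw [Real.norm_eq_abs, abs_of_nonneg ht]))
          _ = ENNReal.ofReal t * ENNReal.ofReal (k₀ * ‖u - v‖) + ENNReal.ofReal t * ε' := by
              rw [mul_add]
          _ ≤ ENNReal.ofReal (t * (k₀ * ‖u - v‖)) + ε := by
              gcongr
              · rw [← ENNReal.ofReal_mul ht]
              · calc ENNReal.ofReal t * ε'
                    ≤ ENNReal.ofReal (t + 1) * ((ε : ENNReal) / ENNReal.ofReal (t + 1)) := by
                      apply mul_le_mul' (ENNReal.ofReal_le_ofReal (by linarith)) le_rfl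
                  _ = ε := ENNReal.mul_div_cancel htne ENNReal.ofReal_ne_top
    -- combine
    have tri := innerDist_triangle X (t • u) (t • v) (s • v)
    have hreal : t * (k₀ * ‖u - v‖) + (s - t) ≤ (2*k₀ + 1) * ‖t • u - s • v‖ := by
      have hst : s - t ≤ ‖t • u - s • v‖ := by
        have h1 : ‖s • v‖ - ‖t • u‖ ≤ ‖s • v - t • u‖ := norm_sub_norm_le _ _
        rw [norm_smul, norm_smul, hnorm u hu, hnorm v hv, Real.norm_eq_abs, Real.norm_eq_abs,
          abs_of_nonneg hs, abs_of_nonneg ht, mul_one, mul_one, norm_sub_rev] at h1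
        linarith
      have h2 : t * ‖u - v‖ ≤ 2 * ‖t • u - s • v‖ := by
        have := norm_sub_le_norm_sub_add_norm_sub (t • u) (s • v) (t • v)
        have e1 : ‖t • u - t • v‖ = t * ‖u - v‖ := by
          rw [← smul_sub, norm_smul, Real.norm_eq_abs, abs_of_nonneg ht]
        have e2 : ‖s • v - t • v‖ = s - t := by
          rw [← sub_smul, norm_smul, Real.norm_eq_abs, abs_of_nonneg (by linarith : 0 ≤ s - t),
            hnorm v hv, mul_one]
        nlinarith
      nlinarith [norm_nonneg (t • u - s • v), norm_nonneg (u - v)]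
    calc innerDist X (t • u) (s • v)
        ≤ innerDist X (t • u) (t • v) + innerDist X (t • v) (s • v) := tri
      _ ≤ (ENNReal.ofReal (t * (k₀ * ‖u - v‖)) + ε) + ENNReal.ofReal (s - t) :=
          add_le_add scaled radial
      _ = (ENNReal.ofReal (t * (k₀ * ‖u - v‖)) + ENNReal.ofReal (s - t)) + ε := by ring
      _ ≤ ENNReal.ofReal ((2*k₀ + 1) * ‖t • u - s • v‖) + ε := by
          gcongr
          rw [← ENNReal.ofReal_add (by positivity) (by linarith)]
          exact ENNReal.ofReal_le_ofReal hreal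
  rintro x hx y hy
  rw [hX] at hx hy
  obtain ⟨t, ht, u, hu, rfl⟩ := hx
  obtain ⟨s, hs, v, hv, rfl⟩ := hy
  rcases le_total t s with h | h
  · exact key t s ht h u hu v hv
  · rw [innerDist_symm, norm_sub_rev]
    exact key s t hs h v hv u hu
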